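/- For the extended hitting time of the non-atomic walk and any states x, y, z (original or intermediate), H̃(x, ȳ) + H̃(y, z̄) + H̃(z, x̄) = H̃(x, z̄) + H̃(z, ȳ) + H̃(y, x̄), where s̄ denotes the direction-reversed state (s̄ = s for original vertices and s̄_{ab} = s_{ba} for intermediate states). -/

import Mathlib

open Finset

/-- State space of the non-atomic walk: original vertices plus directed intermediate states. -/
def NAState (V : Type*) (G : SimpleGraph V) : Type _ :=
  V ⊕ {p : V × V // G.Adj p.1 p.2}

namespace NAState

variable {V : Type*} {G : SimpleGraph V}

/-- Original-vertex state. -/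
def orig (v : V) : NAState V G := Sum.inl v

/-- Intermediate state `s_{ab}`, directed from `a` to `b`. -/
def intm (a b : V) (h : G.Adj a b) : NAState V G := Sum.inr ⟨(a, b), h⟩

/-- Direction reversal: fixes original vertices, reverses intermediate states. -/
def bar : NAState V G → NAState V G
  | Sum.inl v => Sum.inl v
  | Sum.inr ⟨(a, b), h⟩ => Sum.inr ⟨(b, a), h.symm⟩

variable [Fintype V] [DecidableRel G.Adj]

/-- The number `d_s` of adjacent states of a state. -/
def asDeg : NAState V G → ℝ
  | Sum.inl v => (G.degree v : ℝ)
  | Sum.inr _ => 1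

/-- Sum of `f` over the adjacent states `N_as(s)` of a state. -/
def asSum (f : NAState V G → ℝ) : NAState V G → ℝ
  | Sum.inl v => ∑ w ∈ (G.neighborFinset v).attach,
      f (Sum.inr ⟨(v, w.1), (G.mem_neighborFinset _ _).mp w.2⟩)
  | Sum.inr ⟨(_, b), _⟩ => f (Sum.inl b)

end NAState
set_option linter.unusedSectionVars false
set_option maxHeartbeats 1000000
namespace NAH
variable {V : Type*} [Fintype V] [DecidableEq V] {G : SimpleGraph V} [DecidableRel G.Adj]
instance : DecidableEq (NAState V G) :=
  inferInstanceAs (DecidableEq (V ⊕ {p : V × V // G.Adj p.1 p.2}))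
instance : Fintype (NAState V G) :=
  inferInstanceAs (Fintype (V ⊕ {p : V × V // G.Adj p.1 p.2}))

noncomputable def tP (G : SimpleGraph V) [DecidableRel G.Adj] :
    NAState V G → NAState V G → ℝ :=
  fun s t => match s, t with
  | Sum.inl v, Sum.inr ⟨(a, _), _⟩ => if a = v then 1 / (G.degree v : ℝ) else 0
  | Sum.inr ⟨(_, b), _⟩, Sum.inl w => if w = b then 1 else 0
  | _, _ => 0

noncomputable def tmu (G : SimpleGraph V) [DecidableRel G.Adj] : NAState V G → ℝ :=
  fun s => match s with
  | Sum.inl v => (G.degree v : ℝ)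
  | Sum.inr _ => 1

lemma tP_nonneg (s t : NAState V G) : 0 ≤ tP G s t := by
  rcases s with v | ⟨⟨a,b⟩,h⟩ <;> rcases t with w | ⟨⟨c,d⟩,h'⟩ <;>
    simp only [tP] <;> positivity

lemma sum_state (f : NAState V G → ℝ) :
    ∑ s : NAState V G, f s
      = ∑ v : V, f (Sum.inl v) + ∑ e : {p : V × V // G.Adj p.1 p.2}, f (Sum.inr e) :=
  Fintype.sum_sum_type f

lemma sum_edge (g : {p : V × V // G.Adj p.1 p.2} → ℝ) :
    ∑ e : {p : V × V // G.Adj p.1 p.2}, g e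
      = ∑ p : V × V, if h : G.Adj p.1 p.2 then g ⟨p, h⟩ else 0 := by
  have h1 : ∑ e : {p : V × V // G.Adj p.1 p.2}, g e
      = ∑ e : {p : V × V // G.Adj p.1 p.2},
          (fun p : V × V => if h : G.Adj p.1 p.2 then g ⟨p, h⟩ else 0) e.1 := by
    apply Finset.sum_congr rfl
    intro e _
    simp [e.2]
  rw [h1, ← Finset.sum_subtype (s := Finset.univ.filter (fun p : V × V => G.Adj p.1 p.2))
      (by intro p; simp) (fun p => if h : G.Adj p.1 p.2 then g ⟨p, h⟩ else 0),
    Finset.sum_filter]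
  apply Finset.sum_congr rfl
  intro p _
  by_cases h : G.Adj p.1 p.2 <;> simp [h]

lemma asSum_inl (v : V) (f : NAState V G → ℝ) :
    NAState.asSum f (Sum.inl v)
      = ∑ b : V, if h : G.Adj v b then f (Sum.inr ⟨(v, b), h⟩) else 0 := by
  show (∑ w ∈ (G.neighborFinset v).attach,
      f (Sum.inr ⟨(v, w.1), (G.mem_neighborFinset _ _).mp w.2⟩)) = _
  have h1 : ∀ w : {x // x ∈ G.neighborFinset v},
      f (Sum.inr ⟨(v, w.1), (G.mem_neighborFinset _ _).mp w.2⟩)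
        = (fun b : V => if h : G.Adj v b then f (Sum.inr ⟨(v, b), h⟩) else 0) w.1 := by
    intro w
    simp [(G.mem_neighborFinset _ _).mp w.2]
  rw [Finset.sum_congr rfl (fun w _ => h1 w),
    Finset.sum_attach (G.neighborFinset v)
      (fun b => if h : G.Adj v b then f (Sum.inr ⟨(v, b), h⟩) else 0)]
  apply Finset.sum_subset (Finset.subset_univ _)
  intro b _ hb
  rw [SimpleGraph.mem_neighborFinset] at hb
  simp [hb]

lemma sumP_inl (v : V) (f : NAState V G → ℝ) :
    ∑ t : NAState V G, tP G (Sum.inl v) t * f t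
      = (1 / (G.degree v : ℝ)) * NAState.asSum f (Sum.inl v) := by
  rw [sum_state, asSum_inl]
  have h0 : ∀ w : V, tP G (Sum.inl v) (Sum.inl w) * f (Sum.inl w) = 0 := by
    intro w; show (0 : ℝ) * _ = 0; ring
  rw [Finset.sum_congr rfl (fun w _ => h0 w), Finset.sum_const_zero, zero_add, sum_edge,
    Finset.mul_sum]
  rw [Fintype.sum_prod_type]
  have h2 : ∀ a : V, (∑ b : V, if h : G.Adj a b then
        tP G (Sum.inl v) (Sum.inr ⟨(a,b), h⟩) * f (Sum.inr ⟨(a,b), h⟩) else 0)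
      = if a = v then (∑ b : V, (1 / (G.degree v : ℝ)) *
          if h : G.Adj v b then f (Sum.inr ⟨(v, b), h⟩) else 0) else 0 := by
    intro a
    by_cases hav : a = v
    · subst hav
      simp only [if_pos rfl]
      apply Finset.sum_congr rfl
      intro b _
      by_cases h : G.Adj a b
      · simp only [dif_pos h]
        show (if a = a then 1 / (G.degree a : ℝ) else 0) * _ = _
        simp
      · simp [h]
    · simp only [if_neg hav]
      apply Finset.sum_eq_zero
      intro b _
      by_cases h : G.Adj a b
      · simp only [dif_pos h]
        show (if a = v then 1 / (G.degree v : ℝ) else 0) * _ = 0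
        simp [hav]
      · simp [h]
  rw [Finset.sum_congr rfl (fun a _ => h2 a), Finset.sum_ite_eq' Finset.univ v]
  simp

lemma sumP_inr (a b : V) (h : G.Adj a b) (f : NAState V G → ℝ) :
    ∑ t : NAState V G, tP G (Sum.inr ⟨(a,b),h⟩) t * f t = f (Sum.inl b) := by
  rw [sum_state]
  have h0 : ∀ e : {p : V × V // G.Adj p.1 p.2},
      tP G (Sum.inr ⟨(a,b),h⟩) (Sum.inr e) * f (Sum.inr e) = 0 := by
    intro ⟨⟨c,d⟩,h'⟩; show (0:ℝ) * _ = 0; ring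
  rw [Finset.sum_congr rfl (fun e _ => h0 e), Finset.sum_const_zero, add_zero]
  have h1 : ∀ w : V, tP G (Sum.inr ⟨(a,b),h⟩) (Sum.inl w) * f (Sum.inl w)
      = if w = b then f (Sum.inl b) else 0 := by
    intro w
    show (if w = b then (1:ℝ) else 0) * _ = _
    by_cases hw : w = b <;> simp [hw]
  rw [Finset.sum_congr rfl (fun w _ => h1 w), Finset.sum_ite_eq' Finset.univ b]
  simp

end NAH
namespace NAH
variable {V : Type*} [Fintype V] [DecidableEq V] {G : SimpleGraph V} [DecidableRel G.Adj]

lemma asSum_const (v : V) :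
    NAState.asSum (fun _ => (1:ℝ)) (Sum.inl v : NAState V G) = (G.degree v : ℝ) := by
  rw [asSum_inl]
  have h1 : ∀ b : V, (if _ : G.Adj v b then (1:ℝ) else 0) = if G.Adj v b then 1 else 0 :=
    fun b => by by_cases h : G.Adj v b <;> simp [h]
  rw [Finset.sum_congr rfl fun b _ => h1 b, Finset.sum_boole]
  norm_num [SimpleGraph.degree, SimpleGraph.neighborFinset_eq_filter]

lemma sum_tP_row (hdeg : ∀ v : V, 0 < G.degree v) (s : NAState V G) :
    ∑ t : NAState V G, tP G s t = 1 := by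
  rcases s with v | ⟨⟨a,b⟩,h⟩
  · have h1 : ∑ t : NAState V G, tP G (Sum.inl v) t
        = ∑ t : NAState V G, tP G (Sum.inl v) t * (fun _ => (1:ℝ)) t := by simp
    rw [h1, sumP_inl, asSum_const]
    have : (G.degree v : ℝ) ≠ 0 := by exact_mod_cast (hdeg v).ne'
    field_simp
  · have h1 : ∑ t : NAState V G, tP G (Sum.inr ⟨(a,b),h⟩) t
        = ∑ t : NAState V G, tP G (Sum.inr ⟨(a,b),h⟩) t * (fun _ => (1:ℝ)) t := by simp
    rw [h1, sumP_inr]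

lemma sum_tP_col (t : NAState V G) :
    ∑ s : NAState V G, tmu G s * tP G s t = tmu G t := by
  rw [sum_state]
  rcases t with w | ⟨⟨a,b⟩,hab⟩
  · have h0 : ∀ v : V, tmu G (Sum.inl v) * tP G (Sum.inl v) (Sum.inl w) = 0 := by
      intro v; show _ * (0:ℝ) = 0; ring
    rw [Finset.sum_congr rfl fun v _ => h0 v, Finset.sum_const_zero, zero_add, sum_edge]
    show _ = (G.degree w : ℝ)
    have h2 : ∀ p : V × V,
        (if h : G.Adj p.1 p.2 then
            tmu G (Sum.inr ⟨p, h⟩) * tP G (Sum.inr ⟨p, h⟩) (Sum.inl w) else 0)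
          = if p.2 = w then (if G.Adj p.1 w then (1:ℝ) else 0) else 0 := by
      rintro ⟨c,d⟩
      by_cases h : G.Adj c d
      · simp only [dif_pos h]
        show (1:ℝ) * (if w = d then 1 else 0) = _
        by_cases hd : d = w
        · subst hd; simp [h]
        · simp [hd, Ne.symm hd]
      · by_cases hd : d = w
        · subst hd; simp [h]
        · simp [h, hd]
    rw [Finset.sum_congr rfl fun p _ => h2 p, Fintype.sum_prod_type]
    have h3 : ∀ c : V, (∑ d : V, if d = w then (if G.Adj c w then (1:ℝ) else 0) else 0)
        = if G.Adj c w then (1:ℝ) else 0 := by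
      intro c; rw [Finset.sum_ite_eq' Finset.univ w]; simp
    rw [Finset.sum_congr rfl fun c _ => h3 c]
    have h4 : ∀ c : V, (if G.Adj c w then (1:ℝ) else 0) = if G.Adj w c then 1 else 0 := by
      intro c; exact if_congr (G.adj_comm c w) rfl rfl
    rw [Finset.sum_congr rfl fun c _ => h4 c, Finset.sum_boole]
    norm_num [SimpleGraph.degree, SimpleGraph.neighborFinset_eq_filter]
  · have h0 : ∀ e : {p : V × V // G.Adj p.1 p.2},
        tmu G (Sum.inr e) * tP G (Sum.inr e) (Sum.inr ⟨(a,b),hab⟩) = 0 := by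
      rintro ⟨⟨c,d⟩,h⟩; show _ * (0:ℝ) = 0; ring
    rw [Finset.sum_congr rfl fun e _ => h0 e, Finset.sum_const_zero, add_zero]
    have h1 : ∀ v : V, tmu G (Sum.inl v) * tP G (Sum.inl v) (Sum.inr ⟨(a,b),hab⟩)
        = if v = a then (G.degree a : ℝ) * (1 / (G.degree a : ℝ)) else 0 := by
      intro v
      show (G.degree v : ℝ) * (if a = v then 1 / (G.degree v : ℝ) else 0) = _
      by_cases hv : v = a
      · subst hv; simp
      · simp [hv, Ne.symm hv]
    rw [Finset.sum_congr rfl fun v _ => h1 v, Finset.sum_ite_eq' Finset.univ a]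
    have hdega : (G.degree a : ℝ) ≠ 0 := by
      have : 0 < G.degree a := (G.degree_pos_iff_exists_adj a).mpr ⟨b, hab⟩
      exact_mod_cast this.ne'
    show (if a ∈ Finset.univ then (G.degree a : ℝ) * (1 / (G.degree a : ℝ)) else 0)
      = (1 : ℝ)
    simp [hdega]

lemma stationary (f : NAState V G → ℝ) :
    ∑ s : NAState V G, tmu G s * (∑ t : NAState V G, tP G s t * f t)
      = ∑ s : NAState V G, tmu G s * f s := by
  have h1 : ∀ s : NAState V G, tmu G s * (∑ t : NAState V G, tP G s t * f t)
      = ∑ t : NAState V G, tmu G s * tP G s t * f t := by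
    intro s; rw [Finset.mul_sum]; exact Finset.sum_congr rfl fun t _ => by ring
  rw [Finset.sum_congr rfl fun s _ => h1 s, Finset.sum_comm]
  apply Finset.sum_congr rfl
  intro t _
  rw [← Finset.sum_mul, sum_tP_col]

end NAH
namespace NAH
variable {V : Type*} [Fintype V] [DecidableEq V] {G : SimpleGraph V} [DecidableRel G.Adj]

lemma harmonic_const (hconn : G.Connected) (hdeg : ∀ v : V, 0 < G.degree v)
    (f : NAState V G → ℝ) (hf : ∀ s, f s = ∑ t : NAState V G, tP G s t * f t) :
    ∀ a b : NAState V G, f a = f b := by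
  have hne : Nonempty V := hconn.nonempty
  obtain ⟨s0, -, hs0⟩ : ∃ s0 ∈ Finset.univ, ∀ s ∈ Finset.univ, f s ≤ f s0 :=
    Finset.exists_max_image Finset.univ f
      ⟨Sum.inl (Classical.arbitrary V), Finset.mem_univ _⟩
  set m := f s0 with hm
  have hle : ∀ s, f s ≤ m := fun s => hs0 s (Finset.mem_univ s)
  have hclose : ∀ s t, f s = m → tP G s t ≠ 0 → f t = m := by
    intro s t hs hst
    have hsum : ∑ u : NAState V G, tP G s u * (m - f u) = 0 := by
      have h1 : ∀ u : NAState V G, tP G s u * (m - f u)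
          = tP G s u * m - tP G s u * f u := fun u => by ring
      rw [Finset.sum_congr rfl fun u _ => h1 u, Finset.sum_sub_distrib, ← Finset.sum_mul,
        sum_tP_row hdeg, ← hf s, hs]
      ring
    have hnn : ∀ u ∈ Finset.univ, (0:ℝ) ≤ tP G s u * (m - f u) := fun u _ =>
      mul_nonneg (tP_nonneg _ _) (by linarith [hle u])
    have h2 := (Finset.sum_eq_zero_iff_of_nonneg hnn).mp hsum t (Finset.mem_univ t)
    rcases mul_eq_zero.mp h2 with h | h
    · exact absurd h hst
    · linarith
  have hPorig : ∀ (u w : V) (h : G.Adj u w),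
      tP G (Sum.inl u) (Sum.inr ⟨(u,w), h⟩) ≠ 0 := by
    intro u w h
    show (if u = u then 1 / (G.degree u : ℝ) else 0) ≠ 0
    have : (G.degree u : ℝ) ≠ 0 := by exact_mod_cast (hdeg u).ne'
    simp [this]
  have hPintm : ∀ (u w : V) (h : G.Adj u w),
      tP G (Sum.inr ⟨(u,w), h⟩ : NAState V G) (Sum.inl w) ≠ 0 := by
    intro u w h
    show (if w = w then (1:ℝ) else 0) ≠ 0
    simp
  have hstep : ∀ u w : V, G.Adj u w → f (Sum.inl u) = m → f (Sum.inl w) = m := by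
    intro u w huw hu
    exact hclose _ _ (hclose _ _ hu (hPorig u w huw)) (hPintm u w huw)
  obtain ⟨v0, hv0⟩ : ∃ v0 : V, f (Sum.inl v0) = m := by
    rcases s0 with v | ⟨⟨a,b⟩,h⟩
    · exact ⟨v, rfl⟩
    · exact ⟨b, hclose _ _ hm.symm (hPintm a b h)⟩
  have key : ∀ (u w : V), G.Walk u w → f (Sum.inl u) = m → f (Sum.inl w) = m := by
    intro u w p
    induction p with
    | nil => exact id
    | cons h q ih => exact fun hu => ih (hstep _ _ h hu)
  have hallv : ∀ v : V, f (Sum.inl v) = m := fun v =>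
    key v0 v ((hconn.preconnected v0 v).some) hv0
  have hall : ∀ s : NAState V G, f s = m := by
    intro s
    rcases s with v | ⟨⟨a,b⟩,h⟩
    · exact hallv v
    · exact hclose _ _ (hallv a) (hPorig a b h)
  intro a b
  rw [hall a, hall b]

end NAH
namespace NAH
variable {V : Type*} [Fintype V] [DecidableEq V] {G : SimpleGraph V} [DecidableRel G.Adj]

noncomputable def tT (G : SimpleGraph V) [DecidableRel G.Adj] : ℝ :=
  ∑ s : NAState V G, tmu G s

noncomputable def Am (G : SimpleGraph V) [DecidableRel G.Adj] :
    Matrix (NAState V G) (NAState V G) ℝ :=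
  Matrix.of fun s t => (if s = t then (1:ℝ) else 0) - tP G s t + tmu G t / tT G

noncomputable def Nm (G : SimpleGraph V) [DecidableRel G.Adj] :
    Matrix (NAState V G) (NAState V G) ℝ := (Am G)⁻¹

lemma tmu_pos (hdeg : ∀ v : V, 0 < G.degree v) (s : NAState V G) : 0 < tmu G s := by
  rcases s with v | ⟨⟨a,b⟩,h⟩
  · show (0:ℝ) < (G.degree v : ℝ); exact_mod_cast hdeg v
  · exact one_pos

lemma tT_pos (hne : Nonempty V) (hdeg : ∀ v : V, 0 < G.degree v) : 0 < tT G :=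
  Finset.sum_pos (fun s _ => tmu_pos hdeg s)
    ⟨Sum.inl (Classical.arbitrary V), Finset.mem_univ _⟩

lemma Am_mulVec (g : NAState V G → ℝ) (s : NAState V G) :
    (Am G).mulVec g s
      = g s - (∑ t : NAState V G, tP G s t * g t)
        + (∑ t : NAState V G, tmu G t * g t) / tT G := by
  show ∑ t : NAState V G, ((if s = t then (1:ℝ) else 0) - tP G s t + tmu G t / tT G) * g t = _
  have h1 : ∀ t : NAState V G,
      ((if s = t then (1:ℝ) else 0) - tP G s t + tmu G t / tT G) * g t
        = (if s = t then g t else 0) - tP G s t * g t + (tmu G t * g t) / tT G := by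
    intro t; by_cases h : s = t <;> simp [h] <;> ring
  rw [Finset.sum_congr rfl fun t _ => h1 t]
  rw [Finset.sum_add_distrib, Finset.sum_sub_distrib, Finset.sum_ite_eq Finset.univ s g,
    ← Finset.sum_div]
  simp

lemma Am_det_ne_zero (hconn : G.Connected) (hdeg : ∀ v : V, 0 < G.degree v) :
    (Am G).det ≠ 0 := by
  intro hdet
  obtain ⟨g, hg0, hg⟩ := (Matrix.exists_mulVec_eq_zero_iff).mpr hdet
  have hmv : ∀ s, g s - (∑ t : NAState V G, tP G s t * g t)
      + (∑ t : NAState V G, tmu G t * g t) / tT G = 0 := by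
    intro s; rw [← Am_mulVec]; exact congrFun hg s
  have hTpos : 0 < tT G := tT_pos hconn.nonempty hdeg
  set c : ℝ := (∑ t : NAState V G, tmu G t * g t) / tT G with hc
  -- multiply by tmu and sum
  have hsum : ∑ s : NAState V G, tmu G s *
      (g s - (∑ t : NAState V G, tP G s t * g t) + c) = 0 := by
    rw [Finset.sum_congr rfl (fun s _ => by rw [hmv s, mul_zero]), Finset.sum_const_zero]
  have hexp : ∑ s : NAState V G, tmu G s *
      (g s - (∑ t : NAState V G, tP G s t * g t) + c)
      = tT G * c := by
    have h1 : ∀ s : NAState V G, tmu G s *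
        (g s - (∑ t : NAState V G, tP G s t * g t) + c)
        = tmu G s * g s - tmu G s * (∑ t : NAState V G, tP G s t * g t) + tmu G s * c := by
      intro s; ring
    rw [Finset.sum_congr rfl fun s _ => h1 s, Finset.sum_add_distrib, Finset.sum_sub_distrib,
      stationary, ← Finset.sum_mul]
    rw [show (∑ s : NAState V G, tmu G s) = tT G from rfl]
    ring
  have hc0 : c = 0 := by
    have := hexp ▸ hsum
    rcases mul_eq_zero.mp this with h | h
    · exact absurd h hTpos.ne'
    · exact h
  have hharm : ∀ s, g s = ∑ t : NAState V G, tP G s t * g t := by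
    intro s
    have := hmv s
    rw [hc0] at this
    linarith
  have hconst := harmonic_const hconn hdeg g hharm
  -- sum tmu g = tT * c = 0, so g is the zero constant
  have hmg : ∑ t : NAState V G, tmu G t * g t = 0 := by
    have h2 : ∑ t : NAState V G, tmu G t * g t = tT G * c := by
      rw [hc, mul_div_cancel₀ _ hTpos.ne']
    rw [h2, hc0, mul_zero]
  apply hg0
  funext s
  have hgs : ∀ t, g t = g s := fun t => hconst t s
  have : ∑ t : NAState V G, tmu G t * g t = tT G * g s := by
    rw [Finset.sum_congr rfl fun t _ => by rw [hgs t], ← Finset.sum_mul]; rfl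
  rw [this] at hmg
  rcases mul_eq_zero.mp hmg with h | h
  · exact absurd h hTpos.ne'
  · exact h

end NAH
namespace NAH
variable {V : Type*} [Fintype V] [DecidableEq V] {G : SimpleGraph V} [DecidableRel G.Adj]

lemma hAN (hconn : G.Connected) (hdeg : ∀ v : V, 0 < G.degree v) :
    Am G * Nm G = 1 :=
  Matrix.mul_nonsing_inv _ (isUnit_iff_ne_zero.mpr (Am_det_ne_zero hconn hdeg))

lemma hNA (hconn : G.Connected) (hdeg : ∀ v : V, 0 < G.degree v) :
    Nm G * Am G = 1 :=
  Matrix.nonsing_inv_mul _ (isUnit_iff_ne_zero.mpr (Am_det_ne_zero hconn hdeg))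

lemma hmuA (hconn : G.Connected) (hdeg : ∀ v : V, 0 < G.degree v) (t : NAState V G) :
    ∑ s : NAState V G, tmu G s * Am G s t = tmu G t := by
  have hT : (tT G) ≠ 0 := (tT_pos hconn.nonempty hdeg).ne'
  have h1 : ∀ s : NAState V G, tmu G s * Am G s t
      = tmu G s * (if s = t then (1:ℝ) else 0) - tmu G s * tP G s t
        + tmu G s * (tmu G t / tT G) := by
    intro s; show tmu G s * (_ - _ + _) = _; ring
  rw [Finset.sum_congr rfl fun s _ => h1 s, Finset.sum_add_distrib, Finset.sum_sub_distrib]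
  have h2 : ∑ s : NAState V G, tmu G s * (if s = t then (1:ℝ) else 0) = tmu G t := by
    have : ∀ s : NAState V G, tmu G s * (if s = t then (1:ℝ) else 0)
        = if s = t then tmu G t else 0 := by
      intro s; by_cases h : s = t <;> simp [h]
    rw [Finset.sum_congr rfl fun s _ => this s, Finset.sum_ite_eq' Finset.univ t]
    simp
  have h3 : ∑ s : NAState V G, tmu G s * (tmu G t / tT G) = tmu G t := by
    rw [← Finset.sum_mul, show (∑ s : NAState V G, tmu G s) = tT G from rfl]
    field_simp
  rw [h2, h3, sum_tP_col]
  ring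

lemma hmuN (hconn : G.Connected) (hdeg : ∀ v : V, 0 < G.degree v) (t : NAState V G) :
    ∑ s : NAState V G, tmu G s * Nm G s t = tmu G t := by
  have h1 : Matrix.vecMul (fun s => tmu G s) (Am G) = fun s => tmu G s := by
    funext t
    rw [Matrix.vecMul, dotProduct]
    exact hmuA hconn hdeg t
  have h2 : Matrix.vecMul (fun s => tmu G s) (Nm G) = fun s => tmu G s := by
    calc Matrix.vecMul (fun s => tmu G s) (Nm G)
        = Matrix.vecMul (Matrix.vecMul (fun s => tmu G s) (Am G)) (Nm G) := by rw [h1]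
      _ = Matrix.vecMul (fun s => tmu G s) (Am G * Nm G) := by rw [Matrix.vecMul_vecMul]
      _ = Matrix.vecMul (fun s => tmu G s) 1 := by rw [hAN hconn hdeg]
      _ = fun s => tmu G s := Matrix.vecMul_one _
  have := congrFun h2 t
  rw [Matrix.vecMul, dotProduct] at this
  exact this

lemma hPN (hconn : G.Connected) (hdeg : ∀ v : V, 0 < G.degree v) (s y : NAState V G) :
    ∑ t : NAState V G, tP G s t * Nm G t y
      = Nm G s y - (if s = y then 1 else 0) + tmu G y / tT G := by
  have h := congrFun (congrFun (hAN hconn hdeg) s) y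
  rw [Matrix.mul_apply, Matrix.one_apply] at h
  have h1 : ∀ u : NAState V G, Am G s u * Nm G u y
      = (if s = u then Nm G u y else 0) - tP G s u * Nm G u y
        + (tmu G u * Nm G u y) / tT G := by
    intro u
    show ((if s = u then (1:ℝ) else 0) - _ + _) * _ = _
    by_cases hsu : s = u <;> simp [hsu] <;> ring
  rw [Finset.sum_congr rfl fun u _ => h1 u, Finset.sum_add_distrib, Finset.sum_sub_distrib,
    Finset.sum_ite_eq Finset.univ s, ← Finset.sum_div, hmuN hconn hdeg] at h
  simp only [Finset.mem_univ, if_true] at h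
  linarith [h]

lemma hrec (Ht : NAState V G → NAState V G → ℝ)
    (hHtorig : ∀ (v : V) (s : NAState V G), NAState.orig v ≠ s →
      Ht (NAState.orig v) s =
        1 + (1 / (G.degree v : ℝ)) * NAState.asSum (fun z => Ht z s) (NAState.orig v))
    (hHtintm : ∀ (a b : V) (h : G.Adj a b) (s : NAState V G), NAState.intm a b h ≠ s →
      Ht (NAState.intm a b h) s = 1 + Ht (NAState.orig b) s)
    (s t : NAState V G) (hst : s ≠ t) :
    Ht s t = 1 + ∑ u : NAState V G, tP G s u * Ht u t := by
  rcases s with v | ⟨⟨a,b⟩,h⟩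
  · rw [sumP_inl]
    exact hHtorig v t hst
  · rw [sumP_inr]
    exact hHtintm a b h t hst

end NAH
namespace NAH
variable {V : Type*} [Fintype V] [DecidableEq V] {G : SimpleGraph V} [DecidableRel G.Adj]

lemma return_time (hconn : G.Connected) (hdeg : ∀ v : V, 0 < G.degree v)
    (Ht : NAState V G → NAState V G → ℝ)
    (hHt0 : ∀ s, Ht s s = 0)
    (hrec' : ∀ s t : NAState V G, s ≠ t →
      Ht s t = 1 + ∑ u : NAState V G, tP G s u * Ht u t)
    (y : NAState V G) :
    tmu G y * ∑ u : NAState V G, tP G y u * Ht u y = tT G - tmu G y := by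
  have hst := stationary (G := G) (fun u => Ht u y)
  set F : NAState V G → ℝ := fun s => ∑ t : NAState V G, tP G s t * Ht t y with hF
  rw [← Finset.sum_erase_add Finset.univ _ (Finset.mem_univ y),
    ← Finset.sum_erase_add Finset.univ (fun s => tmu G s * Ht s y) (Finset.mem_univ y)]
      at hst
  have h1 : ∑ s ∈ Finset.univ.erase y, tmu G s * F s
      = ∑ s ∈ Finset.univ.erase y, (tmu G s * Ht s y - tmu G s) := by
    apply Finset.sum_congr rfl
    intro s hs
    have hsy : s ≠ y := Finset.ne_of_mem_erase hs
    have := hrec' s y hsy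
    have hFs : F s = Ht s y - 1 := by rw [hF]; dsimp only; linarith [this]
    rw [hFs]; ring
  rw [h1, Finset.sum_sub_distrib] at hst
  have h2 : ∑ s ∈ Finset.univ.erase y, tmu G s = tT G - tmu G y := by
    have := Finset.sum_erase_add Finset.univ (fun s => tmu G s) (Finset.mem_univ y)
    have hT : ∑ s : NAState V G, tmu G s = tT G := rfl
    linarith [this, hT]
  rw [h2, hHt0 y] at hst
  have : F y = ∑ u : NAState V G, tP G y u * Ht u y := rfl
  linarith [hst]

lemma rep (hconn : G.Connected) (hdeg : ∀ v : V, 0 < G.degree v)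
    (Ht : NAState V G → NAState V G → ℝ)
    (hHt0 : ∀ s, Ht s s = 0)
    (hrec' : ∀ s t : NAState V G, s ≠ t →
      Ht s t = 1 + ∑ u : NAState V G, tP G s u * Ht u t)
    (x y : NAState V G) :
    Ht x y = (Nm G y y - Nm G x y) * (tT G / tmu G y) := by
  have hTpos := tT_pos hconn.nonempty hdeg
  have hmy : (0:ℝ) < tmu G y := tmu_pos hdeg y
  set C : ℝ := tT G / tmu G y with hC
  have hCmu : C * (tmu G y / tT G) = 1 := by rw [hC]; field_simp
  set d : NAState V G → ℝ := fun s => Ht s y + Nm G s y * C with hd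
  have hharm : ∀ s, d s = ∑ t : NAState V G, tP G s t * d t := by
    intro s
    have hsplit : ∑ t : NAState V G, tP G s t * d t
        = (∑ t : NAState V G, tP G s t * Ht t y)
          + C * (Nm G s y - (if s = y then 1 else 0) + tmu G y / tT G) := by
      rw [← hPN hconn hdeg s y, Finset.mul_sum, ← Finset.sum_add_distrib]
      apply Finset.sum_congr rfl
      intro t _
      rw [hd]; dsimp only; ring
    by_cases hsy : s = y
    · subst hsy
      have hret := return_time hconn hdeg Ht hHt0 hrec' s
      have hmul : tmu G s * (C - 1) = tT G - tmu G s := by rw [hC]; field_simp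
      have hFs : ∑ t : NAState V G, tP G s t * Ht t s = C - 1 :=
        mul_left_cancel₀ hmy.ne' (hret.trans hmul.symm)
      rw [hsplit, hFs, if_pos rfl, hd]
      dsimp only
      rw [hHt0 s]
      have hexp : C * (Nm G s s - 1 + tmu G s / tT G)
          = C * Nm G s s - C + C * (tmu G s / tT G) := by ring
      rw [hexp, hCmu]
      ring
    · rw [hsplit, if_neg hsy, hd]
      dsimp only
      have hF : ∑ t : NAState V G, tP G s t * Ht t y = Ht s y - 1 := by
        linarith [hrec' s y hsy]
      rw [hF]
      have : C * (Nm G s y - 0 + tmu G y / tT G)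
          = C * Nm G s y + C * (tmu G y / tT G) := by ring
      rw [this, hCmu]
      ring
  have hconst := harmonic_const hconn hdeg d hharm x y
  rw [hd] at hconst
  dsimp only at hconst
  rw [hHt0 y] at hconst
  have : Ht x y = Nm G y y * C - Nm G x y * C := by linarith [hconst]
  rw [this]; ring

lemma bar_bar (s : NAState V G) : NAState.bar (NAState.bar s) = s := by
  rcases s with v | ⟨⟨a,b⟩,h⟩ <;> rfl

lemma tmu_bar (s : NAState V G) : tmu G (NAState.bar s) = tmu G s := by
  rcases s with v | ⟨⟨a,b⟩,h⟩ <;> rfl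

lemma bar_inj : Function.Injective (NAState.bar : NAState V G → NAState V G) := by
  intro a b h
  rw [← bar_bar (G := G) a, h, bar_bar]

noncomputable def barE (G : SimpleGraph V) [DecidableRel G.Adj] :
    NAState V G ≃ NAState V G where
  toFun := NAState.bar
  invFun := NAState.bar
  left_inv := bar_bar
  right_inv := bar_bar

lemma key_rev (x y : NAState V G) :
    tmu G x * tP G (NAState.bar x) (NAState.bar y) = tmu G y * tP G y x := by
  rcases x with v | ⟨⟨a,b⟩,hab⟩ <;> rcases y with w | ⟨⟨c,d⟩,hcd⟩
  · show tmu G (Sum.inl v) * (0:ℝ) = tmu G (Sum.inl w) * 0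
    ring
  · show (G.degree v : ℝ) * (if d = v then 1 / (G.degree v : ℝ) else 0)
      = 1 * (if v = d then 1 else 0)
    by_cases hdv : d = v
    · subst hdv
      have hpos : 0 < G.degree d := (G.degree_pos_iff_exists_adj d).mpr ⟨c, hcd.symm⟩
      have : (G.degree d : ℝ) ≠ 0 := by exact_mod_cast hpos.ne'
      simp [this]
    · simp [hdv, Ne.symm hdv]
  · show (1:ℝ) * (if w = a then 1 else 0)
      = (G.degree w : ℝ) * (if a = w then 1 / (G.degree w : ℝ) else 0)
    by_cases haw : a = w
    · subst haw
      have hpos : 0 < G.degree a := (G.degree_pos_iff_exists_adj a).mpr ⟨b, hab⟩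
      have : (G.degree a : ℝ) ≠ 0 := by exact_mod_cast hpos.ne'
      simp [this]
    · simp [haw, Ne.symm haw]
  · show (1:ℝ) * 0 = (1:ℝ) * 0
    ring

lemma key_revA (x y : NAState V G) :
    tmu G x * Am G (NAState.bar x) (NAState.bar y) = tmu G y * Am G y x := by
  show tmu G x * ((if NAState.bar x = NAState.bar y then (1:ℝ) else 0)
      - tP G (NAState.bar x) (NAState.bar y) + tmu G (NAState.bar y) / tT G)
    = tmu G y * ((if y = x then (1:ℝ) else 0) - tP G y x + tmu G x / tT G)
  have hδ : (if NAState.bar x = NAState.bar y then (1:ℝ) else 0)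
      = if x = y then 1 else 0 := if_congr bar_inj.eq_iff rfl rfl
  have hif : tmu G x * (if x = y then (1:ℝ) else 0)
      = tmu G y * (if y = x then 1 else 0) := by
    by_cases h : x = y
    · subst h; simp
    · simp [h, Ne.symm h]
  rw [hδ, tmu_bar]
  linear_combination hif - key_rev x y
end NAH
namespace NAH
variable {V : Type*} [Fintype V] [DecidableEq V] {G : SimpleGraph V} [DecidableRel G.Adj]

lemma Nm_bar (hconn : G.Connected) (hdeg : ∀ v : V, 0 < G.degree v)
    (x y : NAState V G) :
    Nm G (NAState.bar x) (NAState.bar y) = (tmu G y / tmu G x) * Nm G y x := by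
  set Ab : Matrix (NAState V G) (NAState V G) ℝ :=
    Matrix.of (fun a b => Am G (NAState.bar a) (NAState.bar b)) with hAb
  set Nb : Matrix (NAState V G) (NAState V G) ℝ :=
    Matrix.of (fun a b => Nm G (NAState.bar a) (NAState.bar b)) with hNb
  set N2 : Matrix (NAState V G) (NAState V G) ℝ :=
    Matrix.of (fun a b => (tmu G b / tmu G a) * Nm G b a) with hN2
  have hNbAb : Nb * Ab = 1 := by
    ext a b
    rw [Matrix.mul_apply, Matrix.one_apply]
    have hre : ∑ u : NAState V G, Nb a u * Ab u b
        = ∑ u : NAState V G, Nm G (NAState.bar a) u * Am G u (NAState.bar b) :=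
      Fintype.sum_equiv (barE G) _ _ (fun u => rfl)
    rw [hre, ← Matrix.mul_apply, hNA hconn hdeg, Matrix.one_apply]
    exact if_congr bar_inj.eq_iff rfl rfl
  have hAbN2 : Ab * N2 = 1 := by
    ext a b
    rw [Matrix.mul_apply, Matrix.one_apply]
    have hterm : ∀ u : NAState V G, Ab a u * N2 u b
        = (tmu G b / tmu G a) * (Nm G b u * Am G u a) := by
      intro u
      have hu : tmu G u ≠ 0 := (tmu_pos hdeg u).ne'
      have ha : tmu G a ≠ 0 := (tmu_pos hdeg a).ne'
      have hk := key_revA (G := G) a u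
      show Am G (NAState.bar a) (NAState.bar u) * ((tmu G b / tmu G u) * Nm G b u) = _
      have hA : Am G (NAState.bar a) (NAState.bar u) = (tmu G u / tmu G a) * Am G u a := by
        field_simp
        linear_combination hk
      rw [hA]
      field_simp
    rw [Finset.sum_congr rfl fun u _ => hterm u, ← Finset.mul_sum, ← Matrix.mul_apply,
      hNA hconn hdeg, Matrix.one_apply]
    by_cases hab : a = b
    · subst hab
      simp [(tmu_pos hdeg a).ne']
    · simp [hab, Ne.symm hab]
  have hEq : Nb = N2 := by
    calc Nb = Nb * (Ab * N2) := by rw [hAbN2, Matrix.mul_one]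
      _ = (Nb * Ab) * N2 := by rw [Matrix.mul_assoc]
      _ = N2 := by rw [hNbAb, Matrix.one_mul]
  have := congrFun (congrFun hEq x) y
  simpa [hNb, hN2] using this

end NAH

theorem stmt5 {V : Type*} [Fintype V] [DecidableEq V] (G : SimpleGraph V)
    [DecidableRel G.Adj] (hconn : G.Connected)
    (Ht : NAState V G → NAState V G → ℝ)
    (hHt0 : ∀ s, Ht s s = 0)
    (hHtorig : ∀ (v : V) (s : NAState V G), NAState.orig v ≠ s →
      Ht (NAState.orig v) s =
        1 + (1 / (G.degree v : ℝ)) * NAState.asSum (fun z => Ht z s) (NAState.orig v))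
    (hHtintm : ∀ (a b : V) (h : G.Adj a b) (s : NAState V G), NAState.intm a b h ≠ s →
      Ht (NAState.intm a b h) s = 1 + Ht (NAState.orig b) s)
    (x y z : NAState V G) :
    Ht x y.bar + Ht y z.bar + Ht z x.bar = Ht x z.bar + Ht z y.bar + Ht y x.bar := by
  by_cases hE : ∃ a b : V, G.Adj a b
  · obtain ⟨a0, b0, hab0⟩ := hE
    have hdeg : ∀ v : V, 0 < G.degree v := by
      intro v
      rw [G.degree_pos_iff_exists_adj]
      obtain ⟨p⟩ := hconn.preconnected v a0
      cases p with
      | nil => exact ⟨b0, hab0⟩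
      | cons h q => exact ⟨_, h⟩
    have hrec' := NAH.hrec Ht hHtorig hHtintm
    have hrep := NAH.rep hconn hdeg Ht hHt0 hrec'
    have hbar := NAH.Nm_bar hconn hdeg
    have hterm : ∀ u w : NAState V G, Ht u (NAState.bar w) - Ht w (NAState.bar u)
        = NAH.Nm G w w * (NAH.tT G / NAH.tmu G w)
          - NAH.Nm G u u * (NAH.tT G / NAH.tmu G u) := by
      intro u w
      have hmu_u : (NAH.tmu G u) ≠ 0 := (NAH.tmu_pos hdeg u).ne'
      have hmu_w : (NAH.tmu G w) ≠ 0 := (NAH.tmu_pos hdeg w).ne'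
      have hTpos : (0:ℝ) < NAH.tT G := NAH.tT_pos hconn.nonempty hdeg
      have hww := hbar w w
      rw [div_self hmu_w, one_mul] at hww
      have huu := hbar u u
      rw [div_self hmu_u, one_mul] at huu
      have huw : NAH.Nm G u (NAState.bar w)
          = (NAH.tmu G w / NAH.tmu G u) * NAH.Nm G w (NAState.bar u) := by
        have h2 := hbar (NAState.bar u) w
        rwa [NAH.bar_bar, NAH.tmu_bar] at h2
      have e1 : Ht u (NAState.bar w)
          = (NAH.Nm G w w
              - (NAH.tmu G w / NAH.tmu G u) * NAH.Nm G w (NAState.bar u))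
            * (NAH.tT G / NAH.tmu G w) := by
        rw [hrep u (NAState.bar w), hww, huw, NAH.tmu_bar]
      have e2 : Ht w (NAState.bar u)
          = (NAH.Nm G u u - NAH.Nm G w (NAState.bar u))
            * (NAH.tT G / NAH.tmu G u) := by
        rw [hrep w (NAState.bar u), huu, NAH.tmu_bar]
      rw [e1, e2]
      field_simp
      ring
    have h1 := hterm x y
    have h2 := hterm y z
    have h3 := hterm z x
    show Ht x (NAState.bar y) + Ht y (NAState.bar z) + Ht z (NAState.bar x)
      = Ht x (NAState.bar z) + Ht z (NAState.bar y) + Ht y (NAState.bar x)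
    linarith [h1, h2, h3]
  · push_neg at hE
    have hall : ∀ s t : NAState V G, s = t := by
      intro s t
      rcases s with v | ⟨⟨a,b⟩,h⟩
      · rcases t with w | ⟨⟨a,b⟩,h⟩
        · obtain ⟨p⟩ := hconn.preconnected v w
          cases p with
          | nil => rfl
          | cons h q => exact absurd h (hE _ _)
        · exact absurd h (hE a b)
      · exact absurd h (hE a b)
    rw [hall y x, hall z x]
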